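/- arXiv:1912.00671 — 2 statements merged into one kernel-verified Lean document; each statement's English description precedes it below -/
import Mathlib

section
/- Let F = G ⊕ H be a direct sum of Hilbert spaces and C a positive bounded operator on F with block structure [[C_U, C_{UV}],[C_{VU}, C_V]]. Then the pair (C, H) is compatible (i.e. there exists a bounded operator Q on F with Q² = Q, ran Q = H, and C Q = Q* C) if and only if ran C_{VU} ⊆ ran C_V. -/
noncomputable section
open scoped RealInnerProductSpace

variable (G H : Type*)
  [NormedAddCommGroup G] [InnerProductSpace ℝ G] [CompleteSpace G]
  [NormedAddCommGroup H] [InnerProductSpace ℝ H] [CompleteSpace H]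

/-- The Hilbert direct sum `F = G ⊕ H`. -/
abbrev DirSum := WithLp 2 (G × H)

/-- Embedding of `G` into `G ⊕ H`. -/
def inG : G →L[ℝ] DirSum G H :=
  ((WithLp.prodContinuousLinearEquiv 2 ℝ G H).symm :
      G × H →L[ℝ] DirSum G H).comp (ContinuousLinearMap.inl ℝ G H)

/-- Embedding of `H` into `G ⊕ H`. -/
def inH : H →L[ℝ] DirSum G H :=
  ((WithLp.prodContinuousLinearEquiv 2 ℝ G H).symm :
      G × H →L[ℝ] DirSum G H).comp (ContinuousLinearMap.inr ℝ G H)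

/-- Projection of `G ⊕ H` onto `G`. -/
def prG : DirSum G H →L[ℝ] G :=
  (ContinuousLinearMap.fst ℝ G H).comp
    ((WithLp.prodContinuousLinearEquiv 2 ℝ G H : DirSum G H →L[ℝ] G × H))

/-- Projection of `G ⊕ H` onto `H`. -/
def prH : DirSum G H →L[ℝ] H :=
  (ContinuousLinearMap.snd ℝ G H).comp
    ((WithLp.prodContinuousLinearEquiv 2 ℝ G H : DirSum G H →L[ℝ] G × H))


/-- **Douglas factorization**: range inclusion gives a bounded factor. -/
theorem douglas_factor {E₁ E₂ E₃ : Type*}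
    [NormedAddCommGroup E₁] [InnerProductSpace ℝ E₁] [CompleteSpace E₁]
    [NormedAddCommGroup E₂] [InnerProductSpace ℝ E₂] [CompleteSpace E₂]
    [NormedAddCommGroup E₃] [InnerProductSpace ℝ E₃]
    (T : E₂ →L[ℝ] E₃) (S : E₁ →L[ℝ] E₃) (h : Set.range S ⊆ Set.range T) :
    ∃ X : E₁ →L[ℝ] E₂, T.comp X = S := by
  set K : Submodule ℝ E₂ := (LinearMap.ker (T : E₂ →ₗ[ℝ] E₃))ᗮ with hKdef
  have hKclosed : IsClosed (K : Set E₂) := Submodule.isClosed_orthogonal _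
  haveI : CompleteSpace (LinearMap.ker (T : E₂ →ₗ[ℝ] E₃)) := (ContinuousLinearMap.isClosed_ker T).completeSpace_coe
  have hKK : Kᗮ = LinearMap.ker (T : E₂ →ₗ[ℝ] E₃) := Submodule.orthogonal_orthogonal _
  have huniq : ∀ y y' : E₂, y ∈ K → y' ∈ K → T y = T y' → y = y' := by
    intro y y' hy hy' hT
    have hker : y - y' ∈ Kᗮ := by
      rw [hKK]; simp [LinearMap.mem_ker, map_sub, hT]
    have hbot : y - y' ∈ K ⊓ Kᗮ := ⟨K.sub_mem hy hy', hker⟩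
    rw [Submodule.inf_orthogonal_eq_bot K, Submodule.mem_bot] at hbot
    exact sub_eq_zero.mp hbot
  have hex : ∀ g : E₁, ∃ y : E₂, y ∈ K ∧ T y = S g := by
    intro g
    obtain ⟨z, hz⟩ := h ⟨g, rfl⟩
    refine ⟨K.orthogonalProjectionOnto z, (K.orthogonalProjectionOnto z).2, ?_⟩
    have hsub : z - K.orthogonalProjectionOnto z ∈ Kᗮ :=
      K.sub_starProjection_mem_orthogonal z
    rw [hKK, LinearMap.mem_ker, map_sub, sub_eq_zero] at hsub
    exact hsub.symm.trans hz
  choose f hfK hfT using hex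
  let X₀ : E₁ →ₗ[ℝ] E₂ :=
    { toFun := f
      map_add' := by
        intro a b
        refine huniq _ _ (hfK _) (K.add_mem (hfK a) (hfK b)) ?_
        rw [hfT, map_add, map_add, hfT, hfT]
      map_smul' := by
        intro c a
        refine huniq _ _ (hfK _) (K.smul_mem c (hfK a)) ?_
        rw [hfT, map_smul, map_smul, hfT]
        rfl }
  have hX₀ : ∀ g, X₀ g = f g := fun _ => rfl
  have hcont : Continuous X₀ := by
    apply X₀.continuous_of_seq_closed_graph
    intro u x y hu hXu
    have hyK : y ∈ K := by
      refine hKclosed.mem_of_tendsto hXu (Filter.Eventually.of_forall fun n => ?_)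
      exact hfK (u n)
    have h1 : Filter.Tendsto (fun n => T (X₀ (u n))) Filter.atTop (nhds (T y)) :=
      (T.continuous.tendsto y).comp hXu
    have h2 : Filter.Tendsto (fun n => T (X₀ (u n))) Filter.atTop (nhds (S x)) := by
      have : (fun n => T (X₀ (u n))) = fun n => S (u n) := by
        funext n; rw [hX₀, hfT]
      rw [this]
      exact (S.continuous.tendsto x).comp hu
    have hTy : T y = S x := tendsto_nhds_unique h1 h2
    exact huniq _ _ hyK (hfK x) (by rw [hX₀, hfT, hTy])
  refine ⟨⟨X₀, hcont⟩, ?_⟩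
  ext g
  exact hfT g

variable {G H}

@[simp] lemma prG_inG (g : G) : prG G H (inG G H g) = g := rfl
@[simp] lemma prH_inG (g : G) : prH G H (inG G H g) = 0 := rfl
@[simp] lemma prG_inH (h : H) : prG G H (inH G H h) = 0 := rfl
@[simp] lemma prH_inH (h : H) : prH G H (inH G H h) = h := rfl

lemma dirsum_decomp (x : DirSum G H) :
    inG G H (prG G H x) + inH G H (prH G H x) = x := by
  apply (WithLp.prodContinuousLinearEquiv 2 ℝ G H).injective
  ext <;> simp [inG, inH, prG, prH]

lemma dirsum_ext {x y : DirSum G H} (h1 : prG G H x = prG G H y)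
    (h2 : prH G H x = prH G H y) : x = y := by
  rw [← dirsum_decomp x, ← dirsum_decomp y, h1, h2]

lemma inner_inG (a : G) (y : DirSum G H) : ⟪inG G H a, y⟫ = ⟪a, prG G H y⟫ := by
  rw [WithLp.prod_inner_apply]
  have h1 : (inG G H a).ofLp.1 = a := rfl
  have h2 : (inG G H a).ofLp.2 = (0 : H) := rfl
  rw [h1, h2, inner_zero_left, add_zero]
  rfl

lemma inner_inH (b : H) (y : DirSum G H) : ⟪inH G H b, y⟫ = ⟪b, prH G H y⟫ := by
  rw [WithLp.prod_inner_apply]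
  have h1 : (inH G H b).ofLp.1 = (0 : G) := rfl
  have h2 : (inH G H b).ofLp.2 = b := rfl
  rw [h1, h2, inner_zero_left, zero_add]
  rfl

lemma inner_inG' (a : G) (y : DirSum G H) : ⟪y, inG G H a⟫ = ⟪prG G H y, a⟫ := by
  rw [real_inner_comm, inner_inG, real_inner_comm]

lemma inner_inH' (b : H) (y : DirSum G H) : ⟪y, inH G H b⟫ = ⟪prH G H y, b⟫ := by
  rw [real_inner_comm, inner_inH, real_inner_comm]

lemma adjoint_prH : ContinuousLinearMap.adjoint (prH G H) = inH G H :=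
  ((ContinuousLinearMap.eq_adjoint_iff _ _).2 fun x y => inner_inH x y).symm

lemma adjoint_prG : ContinuousLinearMap.adjoint (prG G H) = inG G H :=
  ((ContinuousLinearMap.eq_adjoint_iff _ _).2 fun x y => inner_inG x y).symm

lemma adjoint_inH : ContinuousLinearMap.adjoint (inH G H) = prH G H := by
  rw [← adjoint_prH, ContinuousLinearMap.adjoint_adjoint]

lemma adjoint_inG : ContinuousLinearMap.adjoint (inG G H) = prG G H := by
  rw [← adjoint_prG, ContinuousLinearMap.adjoint_adjoint]

variable (G H)

/-- Let `F = G ⊕ H` and `C` positive bounded on `F` with blocks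
`[[C_U, C_UV],[C_VU, C_V]]`.  Then `(C, H)` is compatible — i.e. there is a bounded
`Q` on `F` with `Q² = Q`, `ran Q = H` and `C Q = Q* C` — iff `ran C_VU ⊆ ran C_V`. -/
theorem statement4
    (C : DirSum G H →L[ℝ] DirSum G H)
    (hsa : IsSelfAdjoint C) (hpos : ∀ x : DirSum G H, 0 ≤ ⟪x, C x⟫) :
    (∃ Q : DirSum G H →L[ℝ] DirSum G H,
        Q.comp Q = Q ∧ Set.range Q = Set.range (inH G H) ∧
        C.comp Q = (ContinuousLinearMap.adjoint Q).comp C) ↔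
      Set.range ((prH G H).comp (C.comp (inG G H)))
        ⊆ Set.range ((prH G H).comp (C.comp (inH G H))) := by
  have hC : ContinuousLinearMap.adjoint C = C := hsa
  set B' := (prH G H).comp (C.comp (inG G H)) with hB'def
  set D := (prH G H).comp (C.comp (inH G H)) with hDdef
  set B := (prG G H).comp (C.comp (inH G H)) with hBdef
  have hDval : ∀ h, D h = prH G H (C (inH G H h)) := fun _ => rfl
  have hB'val : ∀ g, B' g = prH G H (C (inG G H g)) := fun _ => rfl
  have hBval : ∀ h, B h = prG G H (C (inH G H h)) := fun _ => rfl
  -- adjoint of D is D, adjoint of B' is B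
  have hadjD : ContinuousLinearMap.adjoint D = D := by
    rw [hDdef, ContinuousLinearMap.adjoint_comp, ContinuousLinearMap.adjoint_comp,
      adjoint_prH, adjoint_inH, hC, ContinuousLinearMap.comp_assoc]
  have hadjB' : ContinuousLinearMap.adjoint B' = B := by
    rw [hB'def, hBdef, ContinuousLinearMap.adjoint_comp, ContinuousLinearMap.adjoint_comp,
      adjoint_prH, adjoint_inG, hC, ContinuousLinearMap.comp_assoc]
  constructor
  · rintro ⟨Q, hQ2, hQran, hQC⟩
    set X := (prH G H).comp (Q.comp (inG G H)) with hXdef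
    have hQinH : ∀ h : H, Q (inH G H h) = inH G H h := by
      intro h
      have : inH G H h ∈ Set.range Q := hQran ▸ Set.mem_range_self h
      obtain ⟨x, hx⟩ := this
      have := congrArg (fun T => T x) hQ2
      simp only [ContinuousLinearMap.comp_apply] at this
      rw [← hx, this]
    have hprGQ : ∀ x, prG G H (Q x) = 0 := by
      intro x
      have : Q x ∈ Set.range (inH G H) := hQran ▸ Set.mem_range_self x
      obtain ⟨h, hh⟩ := this
      rw [← hh]; simp
    have hQform : ∀ x, Q x = inH G H (prH G H (Q x)) := by
      intro x
      conv_lhs => rw [← dirsum_decomp (Q x)]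
      rw [hprGQ]; simp
    -- prH ∘ Q* = prH
    have hprHQ' : ∀ y, prH G H (ContinuousLinearMap.adjoint Q y) = prH G H y := by
      intro y
      apply ext_inner_right ℝ
      intro h
      rw [← inner_inH', ← inner_inH', ContinuousLinearMap.adjoint_inner_left, hQinH]
    have hXv : ∀ g : G, X g = prH G H (Q (inG G H g)) := fun _ => rfl
    have hDX : D.comp X = B' := by
      ext g
      have h1 : C (Q (inG G H g)) = ContinuousLinearMap.adjoint Q (C (inG G H g)) :=
        congrArg (fun T => T (inG G H g)) hQC
      simp only [ContinuousLinearMap.comp_apply]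
      rw [hDval, hB'val, hXv, ← hQform (inG G H g), h1, hprHQ']
    rw [← hDX]
    rintro y ⟨g, rfl⟩
    exact ⟨X g, rfl⟩
  · intro hr
    obtain ⟨X, hX⟩ := douglas_factor D B' hr
    have hXval : ∀ g, D (X g) = B' g := by
      intro g; exact congrArg (fun T => T g) hX
    have hB : ∀ h, B h = ContinuousLinearMap.adjoint X (D h) := by
      intro h
      rw [← hadjB', ← hX, ContinuousLinearMap.adjoint_comp, hadjD]
      rfl
    set Q := (inH G H).comp ((X.comp (prG G H)) + prH G H) with hQdef
    have hQval : ∀ x, Q x = inH G H (X (prG G H x) + prH G H x) := fun _ => rfl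
    have hQadj : ContinuousLinearMap.adjoint Q
        = (inG G H).comp ((ContinuousLinearMap.adjoint X).comp (prH G H))
          + (inH G H).comp (prH G H) := by
      rw [← ContinuousLinearMap.adjoint_adjoint
        ((inG G H).comp ((ContinuousLinearMap.adjoint X).comp (prH G H))
          + (inH G H).comp (prH G H))]
      congr 1
      refine (ContinuousLinearMap.eq_adjoint_iff _ _).2 fun x y => ?_
      simp only [ContinuousLinearMap.add_apply, ContinuousLinearMap.comp_apply]
      rw [hQval, inner_inH, inner_add_left, inner_add_right, inner_inG', inner_inH',
        ContinuousLinearMap.adjoint_inner_right]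
    refine ⟨Q, ?_, ?_, ?_⟩
    · -- Q ∘ Q = Q
      ext x
      simp only [ContinuousLinearMap.comp_apply]
      rw [show Q (Q x) = Q (inH G H (X (prG G H x) + prH G H x)) from
        congrArg Q (hQval x), hQval, hQval x]
      simp
    · -- range Q = range inH
      apply Set.Subset.antisymm
      · rintro y ⟨x, rfl⟩
        exact ⟨X (prG G H x) + prH G H x, (hQval x).symm⟩
      · rintro y ⟨h, rfl⟩
        exact ⟨inH G H h, by rw [hQval]; simp⟩
    · -- C ∘ Q = Q* ∘ C
      have hXval' : ∀ g : G, D (X g) = B' g := fun g => congrArg (fun T => T g) hX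
      have hCx : ∀ x : DirSum G H,
          prH G H (C x) = B' (prG G H x) + D (prH G H x) := by
        intro x
        conv_lhs => rw [← dirsum_decomp x]
        rw [map_add, map_add, hB'val, hDval]
      ext x
      simp only [ContinuousLinearMap.comp_apply]
      rw [hQadj]
      simp only [ContinuousLinearMap.add_apply, ContinuousLinearMap.comp_apply]
      apply dirsum_ext
      · -- G components
        have eR : prG G H ((inG G H) ((ContinuousLinearMap.adjoint X) (prH G H (C x)))
            + (inH G H) (prH G H (C x)))
            = (ContinuousLinearMap.adjoint X) (prH G H (C x)) := by
          rw [map_add]; simp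
        rw [eR, hQval, ← hBval, map_add, hB, hB, hXval', hCx, map_add]
      · -- H components
        have eR : prH G H ((inG G H) ((ContinuousLinearMap.adjoint X) (prH G H (C x)))
            + (inH G H) (prH G H (C x))) = prH G H (C x) := by
          rw [map_add]; simp
        rw [eR, hQval, ← hDval, map_add, hXval', hCx]
end
end

section
/- Under the CME setup with uncentred operators, the following are equivalent: (i) for each g ∈ G there exists h_g ∈ H with ⟨h_g − f_g, h⟩_{L²(P_X)} = 0 for all h ∈ H; (ii) for each g ∈ G there exists h_g ∈ H with ᵘC_X h_g = ᵘC_{XY} g; (iii) ran ᵘC_{XY} ⊆ ran ᵘC_X. -/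
open MeasureTheory
open scoped RealInnerProductSpace

lemma integrable_mul_of_memL2 {α : Type*} [MeasurableSpace α] {μ : Measure α}
    {f g : α → ℝ} (hf : MemLp f 2 μ) (hg : MemLp g 2 μ) :
    Integrable (fun x => f x * g x) μ := by
  rw [← memLp_one_iff_integrable]
  have := hg.smul hf (p := 2) (q := 2) (r := 1)
  exact this

/-- In the CME setup with uncentred operators, the following are
equivalent:
(i) for each `g ∈ G` there is `h_g ∈ H` with `⟨h_g − f_g, h⟩_{L²(P_X)} = 0` for all `h ∈ H`;
(ii) for each `g ∈ G` there is `h_g ∈ H` with `ᵘC_X h_g = ᵘC_XY g`;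
(iii) `ran ᵘC_XY ⊆ ran ᵘC_X`. -/
theorem statement11 {Ω 𝒳 𝒴 H G : Type*}
    [MeasurableSpace Ω] [MeasurableSpace 𝒳] [MeasurableSpace 𝒴]
    [NormedAddCommGroup H] [InnerProductSpace ℝ H] [CompleteSpace H]
    [TopologicalSpace.SeparableSpace H]
    [NormedAddCommGroup G] [InnerProductSpace ℝ G] [CompleteSpace G]
    [TopologicalSpace.SeparableSpace G]
    (ℙ : Measure Ω) [IsProbabilityMeasure ℙ]
    (X : Ω → 𝒳) (hX : Measurable X) (Y : Ω → 𝒴) (hY : Measurable Y)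
    (φ : 𝒳 → H) (hφ : StronglyMeasurable φ) (ψ : 𝒴 → G) (hψ : StronglyMeasurable ψ)
    (hφ2 : MemLp (fun ω => φ (X ω)) 2 ℙ) (hψ2 : MemLp (fun ω => ψ (Y ω)) 2 ℙ)
    (uCX : H →L[ℝ] H) (uCXY : G →L[ℝ] H)
    (huCX : ∀ h h' : H, ⟪h, uCX h'⟫ = ∫ ω, ⟪h, φ (X ω)⟫ * ⟪h', φ (X ω)⟫ ∂ℙ)
    (huCXY : ∀ (h : H) (g : G), ⟪h, uCXY g⟫ = ∫ ω, ⟪h, φ (X ω)⟫ * ⟪g, ψ (Y ω)⟫ ∂ℙ)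
    (fg : G → 𝒳 → ℝ)
    (hfg : ∀ g : G, (fun ω => fg g (X ω)) =ᵐ[ℙ]
      ℙ[(fun ω => ⟪g, ψ (Y ω)⟫) | MeasurableSpace.comap X ‹MeasurableSpace 𝒳›]) :
    ((∀ g : G, ∃ hg : H, ∀ h : H,
        ∫ ω, (⟪hg, φ (X ω)⟫ - fg g (X ω)) * ⟪h, φ (X ω)⟫ ∂ℙ = 0) ↔
      (∀ g : G, ∃ hg : H, uCX hg = uCXY g)) ∧
    ((∀ g : G, ∃ hg : H, uCX hg = uCXY g) ↔ Set.range uCXY ⊆ Set.range uCX) := by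
  have hm := hX.comap_le
  -- membership in L² of the scalar functions
  have hF2 : ∀ h : H, MemLp (fun ω => ⟪h, φ (X ω)⟫) 2 ℙ := fun h => hφ2.const_inner h
  have hU2 : ∀ g : G, MemLp (fun ω => ⟪g, ψ (Y ω)⟫) 2 ℙ := fun g => hψ2.const_inner g
  -- F is strongly measurable wrt m
  have hXm : Measurable[MeasurableSpace.comap X ‹MeasurableSpace 𝒳›] X :=
    Measurable.of_comap_le le_rfl
  have hFm : ∀ h : H, StronglyMeasurable[MeasurableSpace.comap X ‹MeasurableSpace 𝒳›] (fun ω => ⟪h, φ (X ω)⟫) := by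
    intro h
    have h1 : StronglyMeasurable (fun x => ⟪h, φ x⟫) :=
      (innerSL ℝ h).continuous.comp_stronglyMeasurable hφ
    exact h1.comp_measurable hXm
  -- integrability of products
  have hFU : ∀ (h : H) (g : G),
      Integrable (fun ω => ⟪h, φ (X ω)⟫ * ⟪g, ψ (Y ω)⟫) ℙ := fun h g =>
    integrable_mul_of_memL2 (hF2 h) (hU2 g)
  have hFF : ∀ h h' : H,
      Integrable (fun ω => ⟪h, φ (X ω)⟫ * ⟪h', φ (X ω)⟫) ℙ := fun h h' =>
    integrable_mul_of_memL2 (hF2 h) (hF2 h')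
  -- pull-out property: F * condexp(U) is integrable and has the right integral
  have pullout : ∀ (h : H) (g : G),
      ℙ[(fun ω => ⟪h, φ (X ω)⟫ * ⟪g, ψ (Y ω)⟫) | MeasurableSpace.comap X ‹MeasurableSpace 𝒳›] =ᵐ[ℙ]
        (fun ω => ⟪h, φ (X ω)⟫) * ℙ[(fun ω => ⟪g, ψ (Y ω)⟫) | MeasurableSpace.comap X ‹MeasurableSpace 𝒳›] := fun h g =>
    condExp_mul_of_stronglyMeasurable_left (hFm h) (hFU h g)
      ((memLp_one_iff_integrable.mp ((hU2 g).mono_exponent (by norm_num))))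
  have hIntFfg : ∀ (h : H) (g : G),
      Integrable (fun ω => ⟪h, φ (X ω)⟫ * fg g (X ω)) ℙ := by
    intro h g
    have h1 : Integrable ((fun ω => ⟪h, φ (X ω)⟫) *
        ℙ[(fun ω => ⟪g, ψ (Y ω)⟫) | MeasurableSpace.comap X ‹MeasurableSpace 𝒳›]) ℙ :=
      integrable_condExp.congr (pullout h g)
    refine h1.congr ?_
    filter_upwards [hfg g] with ω hω
    simp [Pi.mul_apply, hω]
  have key : ∀ (h : H) (g : G),
      ∫ ω, ⟪h, φ (X ω)⟫ * fg g (X ω) ∂ℙ = ⟪h, uCXY g⟫ := by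
    intro h g
    rw [huCXY h g]
    have e1 : ∫ ω, ⟪h, φ (X ω)⟫ * fg g (X ω) ∂ℙ =
        ∫ ω, ((fun ω => ⟪h, φ (X ω)⟫) * ℙ[(fun ω => ⟪g, ψ (Y ω)⟫) | MeasurableSpace.comap X ‹MeasurableSpace 𝒳›]) ω ∂ℙ := by
      refine integral_congr_ae ?_
      filter_upwards [hfg g] with ω hω
      simp [Pi.mul_apply, hω]
    rw [e1, ← integral_congr_ae (pullout h g), integral_condExp hm]
  -- symmetry of uCX on inner products
  have hsymm : ∀ h h' : H, ⟪h, uCX h'⟫ = ⟪h', uCX h⟫ := by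
    intro h h'
    rw [huCX h h', huCX h' h]
    exact integral_congr_ae (Filter.Eventually.of_forall fun ω => mul_comm _ _)
  constructor
  · constructor
    · intro h1 g
      obtain ⟨hg, hhg⟩ := h1 g
      refine ⟨hg, ?_⟩
      refine ext_inner_left ℝ fun h => ?_
      have := hhg h
      rw [show (fun ω => (⟪hg, φ (X ω)⟫ - fg g (X ω)) * ⟪h, φ (X ω)⟫) =
          (fun ω => ⟪hg, φ (X ω)⟫ * ⟪h, φ (X ω)⟫ - ⟪h, φ (X ω)⟫ * fg g (X ω)) by
            funext ω; ring] at this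
      rw [integral_sub (hFF hg h) (hIntFfg h g), sub_eq_zero, key h g] at this
      rw [← this, hsymm h hg, huCX hg h]
    · intro h2 g
      obtain ⟨hg, hhg⟩ := h2 g
      refine ⟨hg, fun h => ?_⟩
      rw [show (fun ω => (⟪hg, φ (X ω)⟫ - fg g (X ω)) * ⟪h, φ (X ω)⟫) =
          (fun ω => ⟪hg, φ (X ω)⟫ * ⟪h, φ (X ω)⟫ - ⟪h, φ (X ω)⟫ * fg g (X ω)) by
            funext ω; ring]
      rw [integral_sub (hFF hg h) (hIntFfg h g), sub_eq_zero, key h g, ← huCX hg h,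
        ← hsymm h hg, hhg]
  · constructor
    · rintro h2 x ⟨g, rfl⟩
      obtain ⟨hg, hhg⟩ := h2 g
      exact ⟨hg, hhg⟩
    · intro hsub g
      obtain ⟨hg, hhg⟩ := hsub ⟨g, rfl⟩
      exact ⟨hg, hhg⟩
end
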